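/- arXiv:2112.02681 — 2 statements merged into one kernel-verified Lean document; each statement's English description precedes it below -/
import Mathlib

section
/- The function g(σ) := (σ² − σ)/log σ, extended continuously by g(1) = 1, is strictly increasing on (0, ∞), satisfies lim_{σ→0⁺} g(σ) = 0 and lim_{σ→∞} g(σ) = ∞. -/
open Real Filter

/-- `g(σ) = (σ² − σ)/log σ`, extended by `g(1) = 1`. -/
noncomputable def gFun (σ : ℝ) : ℝ := if σ = 1 then 1 else (σ ^ 2 - σ) / Real.log σ

lemma gFun_eq_integral {σ : ℝ} (hσ : 0 < σ) :
    gFun σ = ∫ t in (1:ℝ)..2, σ ^ t := by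
  rcases eq_or_ne σ 1 with h | h
  · subst h
    simp [gFun]
    norm_num
  · have hlog : Real.log σ ≠ 0 := Real.log_ne_zero_of_pos_of_ne_one hσ h
    have hrw : ∀ t : ℝ, σ ^ t = Real.exp (Real.log σ * t) := by
      intro t
      rw [Real.rpow_def_of_pos hσ, mul_comm]
    simp only [gFun, if_neg h, hrw]
    rw [intervalIntegral.integral_comp_mul_left (fun x => Real.exp x) hlog,
      integral_exp]
    have h1 : Real.exp (Real.log σ * 2) = σ ^ 2 := by
      rw [Real.exp_mul, Real.exp_log hσ, Real.rpow_two]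
    have h2 : Real.exp (Real.log σ * 1) = σ := by
      rw [mul_one, Real.exp_log hσ]
    rw [h1, h2, smul_eq_mul]
    field_simp

theorem stmt_2 :
    StrictMonoOn gFun (Set.Ioi (0 : ℝ)) ∧
    Tendsto gFun (nhdsWithin 0 (Set.Ioi 0)) (nhds 0) ∧
    Tendsto gFun atTop atTop := by
  refine ⟨?_, ?_, ?_⟩
  · intro a ha b hb hab
    rw [Set.mem_Ioi] at ha hb
    rw [gFun_eq_integral ha, gFun_eq_integral hb]
    apply intervalIntegral.integral_lt_integral_of_continuousOn_of_le_of_exists_lt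
      one_lt_two
    · exact (continuous_const.rpow continuous_id fun _ => Or.inl ha.ne').continuousOn
    · exact (continuous_const.rpow continuous_id fun _ => Or.inl hb.ne').continuousOn
    · intro t ht
      exact Real.rpow_le_rpow ha.le hab.le (by linarith [ht.1])
    · refine ⟨1, ⟨le_refl 1, one_le_two⟩, ?_⟩
      simpa using hab
  · have h : ∀ᶠ σ in nhdsWithin (0:ℝ) (Set.Ioi 0), gFun σ = (σ ^ 2 - σ) / Real.log σ := by
      filter_upwards [self_mem_nhdsWithin, eventually_nhdsWithin_of_eventually_nhds
        (eventually_lt_nhds one_pos)] with σ hσ hσ1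
      rw [gFun, if_neg (ne_of_lt hσ1)]
    rw [tendsto_congr' h]
    have hnum : Tendsto (fun σ : ℝ => -(σ ^ 2 - σ)) (nhdsWithin 0 (Set.Ioi 0)) (nhds 0) := by
      have : Tendsto (fun σ : ℝ => -(σ ^ 2 - σ)) (nhds 0) (nhds 0) := by
        have := (continuous_pow 2).sub continuous_id |>.neg |>.tendsto (0:ℝ)
        convert this using 2 <;> simp
      exact this.mono_left nhdsWithin_le_nhds
    have hden : Tendsto (fun σ : ℝ => -Real.log σ) (nhdsWithin 0 (Set.Ioi 0)) atTop :=
      tendsto_neg_atBot_atTop.comp Real.tendsto_log_nhdsGT_zero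
    have := hnum.div_atTop hden
    refine this.congr fun σ => ?_
    rw [neg_div_neg_eq]
  · have h : ∀ᶠ σ in atTop, σ ≤ gFun σ := by
      filter_upwards [eventually_gt_atTop (1:ℝ)] with σ hσ
      have hσ0 : (0:ℝ) < σ := lt_trans one_pos hσ
      rw [gFun, if_neg hσ.ne']
      have hlog : 0 < Real.log σ := Real.log_pos hσ
      rw [le_div_iff₀ hlog]
      have h1 : Real.log σ ≤ σ - 1 := Real.log_le_sub_one_of_pos hσ0
      calc σ * Real.log σ ≤ σ * (σ - 1) := by nlinarith
        _ = σ ^ 2 - σ := by ring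
    exact tendsto_atTop_mono' _ h tendsto_id
end

section
/- As n → ∞, for θ with 1/n ≤ |θ| ≤ π, one has n f_n(θ) = g(n|θ|) + r_n(θ) where g(σ) = (σ² − σ)/log σ and the remainder satisfies |r_n(θ)| ≤ C(n θ² + |θ|) for a constant C independent of n and θ. -/
open Real

/-- The symbol `f_n(θ) = θ² Σ_{j=0}^{n-1} (1/(n|θ|))^{j/n}`. -/
noncomputable def fSymb (n : ℕ) (θ : ℝ) : ℝ :=
  θ ^ 2 * ∑ j ∈ Finset.range n, (1 / ((n : ℝ) * |θ|)) ^ ((j : ℝ) / n)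

set_option maxHeartbeats 1000000 in
/-- Uniform expansion `n f_n(θ) = g(n|θ|) + r_n(θ)` with
`|r_n(θ)| ≤ C (n θ² + |θ|)`, for `1/n ≤ |θ| ≤ π`. -/
theorem stmt_16 :
    ∃ C : ℝ, ∀ n : ℕ, 1 ≤ n → ∀ θ : ℝ, 1 / (n : ℝ) ≤ |θ| → |θ| ≤ π →
      |(n : ℝ) * fSymb n θ - gFun ((n : ℝ) * |θ|)| ≤ C * ((n : ℝ) * θ ^ 2 + |θ|) := by
  refine ⟨5, fun n hn θ h1 h2 => ?_⟩
  have hn0 : (0:ℝ) < n := by exact_mod_cast Nat.lt_of_lt_of_le Nat.zero_lt_one hn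
  have hθ0 : 0 < |θ| := lt_of_lt_of_le (by positivity) h1
  set σ : ℝ := (n:ℝ) * |θ| with hσdef
  have hσ1 : 1 ≤ σ := by
    have := mul_le_mul_of_nonneg_left h1 hn0.le
    rwa [mul_one_div, div_self (ne_of_gt hn0)] at this
  have hσpos : 0 < σ := lt_of_lt_of_le one_pos hσ1
  have hσsq : σ ^ 2 = (n:ℝ) ^ 2 * θ ^ 2 := by
    rw [hσdef, mul_pow, sq_abs]
  have hRHS : 0 ≤ 5 * ((n : ℝ) * θ ^ 2 + |θ|) := by positivity
  rcases eq_or_lt_of_le hσ1 with h | hσgt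
  · -- case σ = 1
    have hterm : ∀ j ∈ Finset.range n, (1 / ((n:ℝ) * |θ|)) ^ ((j:ℝ)/n) = 1 := by
      intro j _
      rw [← hσdef, ← h]
      simp
    have hf : fSymb n θ = θ ^ 2 * n := by
      rw [fSymb, Finset.sum_congr rfl hterm]
      simp
    have hsq1 : (n:ℝ) ^ 2 * θ ^ 2 = 1 := by rw [← hσsq, ← h]; norm_num
    rw [hf, ← h, gFun, if_pos rfl]
    have : (n:ℝ) * (θ ^ 2 * n) - 1 = 0 := by nlinarith
    rw [this, abs_zero]
    exact hRHS
  · -- case σ > 1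
    have hσne : σ ≠ 1 := ne_of_gt hσgt
    have hL : 0 < Real.log σ := Real.log_pos hσgt
    set x : ℝ := Real.log σ / n with hxdef
    have hx0 : 0 < x := div_pos hL hn0
    have hx4 : x ≤ 4 := by
      have hls : Real.log σ ≤ σ - 1 := Real.log_le_sub_one_of_pos hσpos
      have hσπ : σ ≤ (n:ℝ) * π := mul_le_mul_of_nonneg_left h2 hn0.le
      have hπ : π ≤ 4 := by
        have := Real.pi_le_four
        linarith
      rw [hxdef, div_le_iff₀ hn0]
      nlinarith
    have hxn : x * n = Real.log σ := by
      rw [hxdef]; field_simp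
    set r : ℝ := Real.exp (-x) with hrdef
    have hr1 : r < 1 := by
      rw [hrdef]
      exact Real.exp_lt_one_iff.mpr (by linarith)
    have hr0 : 0 < r := Real.exp_pos _
    have hrne : r ≠ 1 := ne_of_lt hr1
    set E : ℝ := 1 - r with hEdef
    -- exp(-x) ≤ 1/(1+x)
    have hex : r ≤ 1 / (1 + x) := by
      rw [hrdef, Real.exp_neg]
      rw [inv_eq_one_div]
      exact one_div_le_one_div_of_le (by linarith) (by linarith [Real.add_one_le_exp x])
    have hE1 : x / 5 ≤ E := by
      rw [hEdef]
      have h1x : (0:ℝ) < 1 + x := by linarith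
      have := (le_div_iff₀ h1x).mp hex
      nlinarith
    have hEpos : 0 < E := lt_of_lt_of_le (by positivity) hE1
    have hE3 : 0 ≤ x - E := by
      have := Real.add_one_le_exp (-x)
      rw [hEdef]; linarith
    have hE2 : x - E ≤ x ^ 2 := by
      have h1x : (0:ℝ) < 1 + x := by linarith
      have := (le_div_iff₀ h1x).mp hex
      rw [hEdef]
      nlinarith
    -- term computation
    have hterm : ∀ j ∈ Finset.range n, (1 / ((n:ℝ) * |θ|)) ^ ((j:ℝ)/n) = r ^ j := by
      intro j _
      rw [← hσdef, hrdef, ← Real.exp_nat_mul,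
        Real.rpow_def_of_pos (by positivity : (0:ℝ) < 1/σ), Real.log_div one_ne_zero
          (ne_of_gt hσpos), Real.log_one]
      congr 1
      rw [hxdef]
      field_simp
      ring
    have hrn : r ^ n = σ⁻¹ := by
      rw [hrdef, ← Real.exp_nat_mul, show (n:ℝ) * (-x) = -(x * n) by ring, hxn,
        Real.exp_neg, Real.exp_log hσpos]
    have hsum : ∑ j ∈ Finset.range n, (1 / ((n:ℝ) * |θ|)) ^ ((j:ℝ)/n)
        = (σ⁻¹ - 1) / (r - 1) := by
      rw [Finset.sum_congr rfl hterm, geom_sum_eq hrne n, hrn]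
    have hlogσ : Real.log σ = (n:ℝ) * x := by rw [← hxn]; ring
    have hA : (n:ℝ) * fSymb n θ - gFun σ
        = (σ ^ 2 - σ) * (x - E) / ((n:ℝ) * E * x) := by
      rw [fSymb, hsum, gFun, if_neg hσne, hlogσ, hEdef]
      have hθsq : θ ^ 2 = σ ^ 2 / (n:ℝ) ^ 2 := by
        rw [hσsq]; field_simp
      rw [hθsq]
      have hrm1 : r - 1 ≠ 0 := by
        intro hc; apply hrne; linarith
      have h1mr : (1:ℝ) - r ≠ 0 := by
        intro hc; apply hrne; linarith
      field_simp
      ring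
    rw [hA]
    have hden : 0 < (n:ℝ) * E * x := by positivity
    have hnum : 0 ≤ (σ ^ 2 - σ) * (x - E) := by
      apply mul_nonneg _ hE3
      nlinarith
    rw [abs_of_nonneg (div_nonneg hnum hden.le), div_le_iff₀ hden]
    have hσ2 : σ ^ 2 - σ ≤ σ ^ 2 := by nlinarith
    have key1 : (σ ^ 2 - σ) * (x - E) ≤ σ ^ 2 * x ^ 2 :=
      mul_le_mul hσ2 hE2 hE3 (sq_nonneg σ)
    have key2 : σ ^ 2 * x ^ 2 ≤ 5 * ((n:ℝ) * θ ^ 2) * ((n:ℝ) * E * x) := by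
      have h5 : σ ^ 2 * x * (x / 5) ≤ σ ^ 2 * x * E :=
        mul_le_mul_of_nonneg_left hE1 (by positivity)
      have hrw : 5 * ((n:ℝ) * θ ^ 2) * ((n:ℝ) * E * x) = 5 * (σ ^ 2 * x * E) := by
        rw [hσsq]; ring
      rw [hrw]
      nlinarith [h5]
    have hextra : 0 ≤ 5 * |θ| * ((n:ℝ) * E * x) := by positivity
    nlinarith
end
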